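/- Mutual information is jointly controlled along a two-point mixture: let P_{X|Y=y₀}, P_{X|Y=y₁} be distributions on a finite set X, and for λ ∈ [0,1] let Y_λ be a {y₀,y₁}-valued random variable with Pr(Y_λ = y₀) = λ, with X drawn from P_{X|Y=y}. Then the function λ ↦ I(Y_λ; X) is continuous on [0,1], equals 0 at λ = 0 and λ = 1, and its one-sided derivative at λ = 0 equals KL(P_{X|Y=y₀} ‖ P_{X|Y=y₁}) (possibly +∞), assuming P_{X|Y=y₀} is absolutely continuous with respect to P_{X|Y=y₁}. -/

import Mathlib

open Finset

/-- A probability vector on a finite set. -/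
def ProbFun {A : Type*} [Fintype A] (p : A → ℝ) : Prop :=
  (∀ a, 0 ≤ p a) ∧ ∑ a, p a = 1

/-- A joint probability on finite sets. -/
def JointFun {A B : Type*} [Fintype A] [Fintype B] (p : A → B → ℝ) : Prop :=
  (∀ a b, 0 ≤ p a b) ∧ ∑ a, ∑ b, p a b = 1

/-- A Markov kernel (stochastic matrix) from `A` to `B`. -/
def Kern {A B : Type*} [Fintype B] (K : A → B → ℝ) : Prop :=
  (∀ a b, 0 ≤ K a b) ∧ ∀ a, ∑ b, K a b = 1

/-- Composition of kernels: `(M ∘ K)(v|x) = ∑ u K(u|x) M(v|u)`. -/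
def kcomp {X U V : Type*} [Fintype U] (M : U → V → ℝ) (K : X → U → ℝ) : X → V → ℝ :=
  fun x v => ∑ u, K x u * M u v

/-- Pushforward of a distribution through a kernel. -/
def kpush {X U : Type*} [Fintype X] (K : X → U → ℝ) (q : X → ℝ) : U → ℝ :=
  fun u => ∑ x, q x * K x u

/-- Mutual information of a finite joint pmf. -/
noncomputable def MIfin {A B : Type*} [Fintype A] [Fintype B] (p : A → B → ℝ) : ℝ :=
  ∑ a, ∑ b, p a b * Real.log (p a b / ((∑ b', p a b') * (∑ a', p a' b)))

/-- Joint distribution of concept `Y` and embedding, for a joint `p` on `Y × X`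
and a channel `K` from `X` (this encodes the Markov chain `Y ↔ X ↔ U`). -/
def jointOut {Y X U : Type*} [Fintype X] (p : Y → X → ℝ) (K : X → U → ℝ) : Y → U → ℝ :=
  fun y u => ∑ x, p y x * K x u

/-- Total variation distance on a finite set. -/
noncomputable def tvDist {A : Type*} [Fintype A] (p q : A → ℝ) : ℝ :=
  (∑ a, |p a - q a|) / 2

/-- Bayes risk: infimum over randomized decision rules of the error probability. -/
noncomputable def bayesRisk {Y U : Type*} [Fintype Y] [Fintype U] (r : Y → U → ℝ) : ℝ :=
  sInf { e | ∃ ρ : U → Y → ℝ, Kern ρ ∧ e = 1 - ∑ y, ∑ u, r y u * ρ u y }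

/-- Le Cam deficiency of `KV` relative to `KU` under input distribution `pX`. -/
noncomputable def deficiency {X U V : Type*} [Fintype X] [Fintype U] [Fintype V]
    (pX : X → ℝ) (KU : X → U → ℝ) (KV : X → V → ℝ) : ℝ :=
  sInf { d | ∃ M : U → V → ℝ, Kern M ∧ d = ∑ x, pX x * tvDist (kcomp M KU x) (KV x) }

/-- Kullback–Leibler divergence on a finite set, `⊤` if absolute continuity fails. -/
noncomputable def KLfin {A : Type*} [Fintype A] (p q : A → ℝ) : EReal :=
  if ∀ a, q a = 0 → p a = 0 then ((∑ a, p a * Real.log (p a / q a) : ℝ) : EReal) else ⊤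


section Aux

lemma keyA (l a b : ℝ) (hl0 : 0 ≤ l) (hl1 : l ≤ 1) (ha : 0 ≤ a) (hb : 0 ≤ b)
    (hab : b = 0 → a = 0) :
    l * a * Real.log (l * a / (l * (l * a + (1 - l) * b)))
      + (1 - l) * b * Real.log ((1 - l) * b / ((1 - l) * (l * a + (1 - l) * b)))
    = Real.negMulLog (l * a + (1 - l) * b)
      - l * Real.negMulLog a - (1 - l) * Real.negMulLog b := by
  rcases eq_or_lt_of_le hb with hb0 | hbpos
  · have ha0 : a = 0 := hab hb0.symm
    simp [← hb0, ha0, Real.negMulLog]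
  rcases eq_or_lt_of_le hl0 with hl | hlpos
  · simp [← hl, Real.negMulLog, div_self hbpos.ne']
  rcases eq_or_lt_of_le hl1 with hl' | hlt1
  · subst hl'
    rcases eq_or_lt_of_le ha with ha0 | hapos
    · simp [← ha0, Real.negMulLog]
    · simp [Real.negMulLog, Real.log_div hapos.ne' hapos.ne']
  · set m := l * a + (1 - l) * b with hm
    have hl1' : 0 < 1 - l := by linarith
    have hmpos : 0 < m := by
      have : 0 < (1 - l) * b := mul_pos hl1' hbpos
      have h' : 0 ≤ l * a := mul_nonneg hl0 ha
      linarith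
    have h2 : (1 - l) * b * Real.log ((1 - l) * b / ((1 - l) * m))
        = (1 - l) * b * (Real.log b - Real.log m) := by
      rw [mul_div_mul_left _ _ hl1'.ne', Real.log_div hbpos.ne' hmpos.ne']
    have h1 : l * a * Real.log (l * a / (l * m))
        = l * a * (Real.log a - Real.log m) := by
      rcases eq_or_lt_of_le ha with ha0 | hapos
      · simp [← ha0]
      · rw [mul_div_mul_left _ _ hlpos.ne', Real.log_div hapos.ne' hmpos.ne']
    rw [h1, h2]
    simp only [Real.negMulLog, hm]
    ring

lemma MI_eq {X : Type*} [Fintype X] (q0 q1 : X → ℝ)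
    (h0 : ProbFun q0) (h1 : ProbFun q1) (hac : ∀ x, q1 x = 0 → q0 x = 0)
    {l : ℝ} (hl : l ∈ Set.Icc (0:ℝ) 1) :
    MIfin (fun (b : Bool) x => if b then l * q0 x else (1 - l) * q1 x)
      = (∑ x, Real.negMulLog (l * q0 x + (1 - l) * q1 x))
        - l * (∑ x, Real.negMulLog (q0 x)) - (1 - l) * (∑ x, Real.negMulLog (q1 x)) := by
  have hr0 : ∑ x, l * q0 x = l := by rw [← Finset.mul_sum, h0.2, mul_one]
  have hr1 : ∑ x, (1 - l) * q1 x = 1 - l := by rw [← Finset.mul_sum, h1.2, mul_one]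
  unfold MIfin
  rw [Fintype.sum_bool]
  simp only [Fintype.sum_bool, Bool.false_eq_true, if_true, if_false]
  rw [hr0, hr1, ← Finset.sum_add_distrib, Finset.mul_sum, Finset.mul_sum,
    ← Finset.sum_sub_distrib, ← Finset.sum_sub_distrib]
  refine Finset.sum_congr rfl fun x _ => ?_
  exact keyA l (q0 x) (q1 x) hl.1 hl.2 (h0.1 x) (h1.1 x) (hac x)

lemma derivG {X : Type*} [Fintype X] (q0 q1 : X → ℝ)
    (h0 : ProbFun q0) (h1 : ProbFun q1)
    (hac : ∀ x, q1 x = 0 → q0 x = 0) :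
    HasDerivAt (fun l : ℝ =>
      (∑ x, Real.negMulLog (l * q0 x + (1 - l) * q1 x))
        - l * (∑ x, Real.negMulLog (q0 x)) - (1 - l) * (∑ x, Real.negMulLog (q1 x)))
      (∑ x, q0 x * Real.log (q0 x / q1 x)) 0 := by
  have hS : HasDerivAt (fun l : ℝ => ∑ x, Real.negMulLog (l * q0 x + (1 - l) * q1 x))
      (∑ x, (-(q0 x) * Real.log (q1 x) + q1 x * Real.log (q1 x) - q0 x + q1 x)) 0 := by
    apply HasDerivAt.fun_sum
    intro x _
    rcases eq_or_ne (q1 x) 0 with hq | hq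
    · have hq0 : q0 x = 0 := hac x hq
      have : (fun l : ℝ => Real.negMulLog (l * q0 x + (1 - l) * q1 x)) = fun _ => 0 := by
        funext l; simp [hq, hq0]
      rw [this, hq, hq0]
      simpa using hasDerivAt_const (0:ℝ) (0:ℝ)
    · have hu : HasDerivAt (fun l : ℝ => l * q0 x + (1 - l) * q1 x) (q0 x - q1 x) 0 := by
        have h1' : HasDerivAt (fun l : ℝ => l * q0 x) (q0 x) 0 := by
          simpa using (hasDerivAt_id (0:ℝ)).mul_const (q0 x)
        have h2' : HasDerivAt (fun l : ℝ => (1 - l) * q1 x) (-q1 x) 0 := by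
          have := ((hasDerivAt_const (0:ℝ) (1:ℝ)).sub (hasDerivAt_id (0:ℝ))).mul_const (q1 x)
          simpa using this
        simpa [sub_eq_add_neg] using h1'.fun_add h2'
      have hval : (0:ℝ) * q0 x + (1 - 0) * q1 x = q1 x := by ring
      have hnm : HasDerivAt Real.negMulLog (-Real.log (q1 x) - 1)
          ((fun l : ℝ => l * q0 x + (1 - l) * q1 x) 0) := by
        simp only [hval]
        exact Real.hasDerivAt_negMulLog hq
      have := hnm.comp 0 hu
      convert this using 1
      · rfl
      · rfl
      ring
  have hA : HasDerivAt (fun l : ℝ => l * (∑ x, Real.negMulLog (q0 x)))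
      (∑ x, Real.negMulLog (q0 x)) 0 := by
    simpa using (hasDerivAt_id (0:ℝ)).mul_const (∑ x, Real.negMulLog (q0 x))
  have hB : HasDerivAt (fun l : ℝ => (1 - l) * (∑ x, Real.negMulLog (q1 x)))
      (-(∑ x, Real.negMulLog (q1 x))) 0 := by
    have := ((hasDerivAt_const (0:ℝ) (1:ℝ)).sub (hasDerivAt_id (0:ℝ))).mul_const
      (∑ x, Real.negMulLog (q1 x))
    simpa using this
  have hptw : ∀ x, -(q0 x) * Real.log (q1 x) + q1 x * Real.log (q1 x) - q0 x + q1 x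
      - Real.negMulLog (q0 x) + Real.negMulLog (q1 x)
      = q0 x * Real.log (q0 x / q1 x) + (q1 x - q0 x) := by
    intro x
    rcases eq_or_ne (q0 x) 0 with hq | hq
    · rcases eq_or_ne (q1 x) 0 with h' | h' <;>
        · simp [hq, h', Real.negMulLog]
    · have hq1 : q1 x ≠ 0 := fun h => hq (hac x h)
      rw [Real.log_div hq hq1]
      simp only [Real.negMulLog]
      ring
  have hDeq : (∑ x, (-(q0 x) * Real.log (q1 x) + q1 x * Real.log (q1 x) - q0 x + q1 x))
      - (∑ x, Real.negMulLog (q0 x)) - (-(∑ x, Real.negMulLog (q1 x)))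
      = ∑ x, q0 x * Real.log (q0 x / q1 x) := by
    rw [sub_neg_eq_add, ← Finset.sum_sub_distrib, ← Finset.sum_add_distrib]
    calc ∑ x, (-(q0 x) * Real.log (q1 x) + q1 x * Real.log (q1 x) - q0 x + q1 x
          - Real.negMulLog (q0 x) + Real.negMulLog (q1 x))
        = ∑ x, (q0 x * Real.log (q0 x / q1 x) + (q1 x - q0 x)) :=
          Finset.sum_congr rfl fun x _ => hptw x
      _ = ∑ x, q0 x * Real.log (q0 x / q1 x) := by
          rw [Finset.sum_add_distrib, Finset.sum_sub_distrib, h0.2, h1.2]; ring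
  have hG := (hS.sub hA).sub hB
  rw [hDeq] at hG
  exact hG

end Aux

/-- mutual information along a two-point mixture is continuous,
vanishes at the endpoints, and its right derivative at `0` is the KL divergence. -/
theorem stmt17 {X : Type*} [Fintype X] (q0 q1 : X → ℝ)
    (h0 : ProbFun q0) (h1 : ProbFun q1)
    (hac : ∀ x, q1 x = 0 → q0 x = 0) :
    ContinuousOn (fun l : ℝ =>
        MIfin (fun (b : Bool) x => if b then l * q0 x else (1 - l) * q1 x))
      (Set.Icc 0 1) ∧
    MIfin (fun (b : Bool) x => if b then (0 : ℝ) * q0 x else (1 - 0) * q1 x) = 0 ∧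
    MIfin (fun (b : Bool) x => if b then (1 : ℝ) * q0 x else (1 - 1) * q1 x) = 0 ∧
    HasDerivWithinAt (fun l : ℝ =>
        MIfin (fun (b : Bool) x => if b then l * q0 x else (1 - l) * q1 x))
      (∑ x, q0 x * Real.log (q0 x / q1 x)) (Set.Ici 0) 0 := by
  classical
  set G : ℝ → ℝ := fun l =>
    (∑ x, Real.negMulLog (l * q0 x + (1 - l) * q1 x))
      - l * (∑ x, Real.negMulLog (q0 x)) - (1 - l) * (∑ x, Real.negMulLog (q1 x)) with hGdef
  have hGcont : Continuous G := by
    apply Continuous.sub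
    apply Continuous.sub
    · exact continuous_finset_sum _ fun x _ =>
        Real.continuous_negMulLog.comp (by continuity)
    · exact continuous_id.mul continuous_const
    · exact (continuous_const.sub continuous_id).mul continuous_const
  have hEq : ∀ l ∈ Set.Icc (0:ℝ) 1,
      MIfin (fun (b : Bool) x => if b then l * q0 x else (1 - l) * q1 x) = G l :=
    fun l hl => MI_eq q0 q1 h0 h1 hac hl
  refine ⟨?_, ?_, ?_, ?_⟩
  · exact (hGcont.continuousOn).congr hEq
  · rw [hEq 0 (by norm_num)]
    simp [hGdef]
  · rw [hEq 1 (by norm_num)]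
    simp [hGdef]
  · have hG := (derivG q0 q1 h0 h1 hac).hasDerivWithinAt (s := Set.Ici (0:ℝ))
    refine hG.congr_of_eventuallyEq ?_ (hEq 0 (by norm_num))
    have hmem : Set.Icc (0:ℝ) 1 ∈ nhdsWithin (0:ℝ) (Set.Ici 0) := by
      have : Set.Icc (0:ℝ) 1 = Set.Ici 0 ∩ Set.Iic 1 := (Set.Ici_inter_Iic).symm
      rw [this]
      exact Filter.inter_mem self_mem_nhdsWithin
        (mem_nhdsWithin_of_mem_nhds (Iic_mem_nhds (by norm_num)))
    exact Filter.eventuallyEq_of_mem hmem hEq
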